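/- arXiv:2107.02678 — 2 statements merged into one kernel-verified Lean document; each statement's English description precedes it below -/
import Mathlib

section
/- Let x0(E) = a(e + cos E) and x1(E) = a√(1−e²)·sin E with a > 0, 0 ≤ e < 1, and φ(E) = arctan(x1(E)/x0(E)). Then on any interval where cos E + e > 0, r(E)·(dφ/dE) = a·√(1−e²), where r(E) = a(1 + e·cos E). -/
theorem r_mul_deriv_phi (a e : ℝ) (ha : a > 0) (he0 : 0 ≤ e) (he1 : e < 1)
    (x0 x1 r φ : ℝ → ℝ)
    (hx0 : ∀ E, x0 E = a * (e + Real.cos E))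
    (hx1 : ∀ E, x1 E = a * Real.sqrt (1 - e ^ 2) * Real.sin E)
    (hr : ∀ E, r E = a * (1 + e * Real.cos E))
    (hφ : ∀ E, φ E = Real.arctan (x1 E / x0 E)) :
    ∀ E, Real.cos E + e > 0 → r E * deriv φ E = a * Real.sqrt (1 - e ^ 2) := by
  intro E hE
  set s := Real.sqrt (1 - e ^ 2) with hs
  have hs2 : (0:ℝ) < 1 - e ^ 2 := by nlinarith
  have hss : s ^ 2 = 1 - e ^ 2 := Real.sq_sqrt hs2.le
  have hφ' : φ = fun E => Real.arctan (s * Real.sin E / (e + Real.cos E)) := by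
    funext t
    rw [hφ, hx0, hx1]
    congr 1
    rw [mul_assoc, mul_div_mul_left _ _ (ne_of_gt ha)]
  have hden : e + Real.cos E ≠ 0 := by linarith
  have h1e : 1 + e * Real.cos E > 0 := by nlinarith [Real.neg_one_le_cos E]
  have hg : HasDerivAt (fun t => s * Real.sin t / (e + Real.cos t))
      ((s * Real.cos E * (e + Real.cos E) - s * Real.sin E * (-Real.sin E)) /
        (e + Real.cos E) ^ 2) E := by
    exact HasDerivAt.div ((Real.hasDerivAt_sin E).const_mul s)
      ((Real.hasDerivAt_cos E).const_add e) hden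
  have hφd : HasDerivAt φ
      ((1 / (1 + (s * Real.sin E / (e + Real.cos E)) ^ 2)) *
        ((s * Real.cos E * (e + Real.cos E) - s * Real.sin E * (-Real.sin E)) /
          (e + Real.cos E) ^ 2)) E := by
    rw [hφ']
    exact (Real.hasDerivAt_arctan _).comp E hg
  rw [hφd.deriv, hr]
  have hsin : Real.sin E ^ 2 = 1 - Real.cos E ^ 2 := by
    have := Real.sin_sq_add_cos_sq E; nlinarith
  field_simp
  linear_combination ((1 + e * Real.cos E) * s - s * (1 - e ^ 2)) * hsin -
    (s * Real.sin E ^ 2) * hss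
end

section
/- Kepler's second law: along the orbit x(E) = a(e+cos E) + i·a√(1−e²)·sin E with time defined by dt/dE = r/√(2h) where r = a(1+e·cos E), the areal velocity dΣ/dt = (1/2)·r²·(dφ/dt) is constant and equals a·√((h/2)(1−e²)). -/
open Complex in
lemma arg_eq_arctan_of_re_pos {z : ℂ} (hz : 0 < z.re) :
    z.arg = Real.arctan (z.im / z.re) := by
  have h := Complex.abs_arg_lt_pi_div_two_iff.mpr (Or.inl hz)
  rw [abs_lt] at h
  rw [← Complex.tan_arg, Real.arctan_tan h.1 h.2]

open Complex in
/-- Kepler's second law: the areal velocity `dΣ/dt = (1/2) r² (dφ/dE)(dE/dt)` is the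
constant `a √((h/2)(1−e²))`, where `dE/dt = √(2h)/r`. -/
theorem keplers_second_law (a e h : ℝ) (ha : a > 0) (he0 : 0 ≤ e) (he1 : e < 1) (hh : h > 0)
    (x : ℝ → ℂ) (r : ℝ → ℝ) (φ : ℝ → ℝ)
    (hx : ∀ E, x E = a * (e + Real.cos E) + I * a * Real.sqrt (1 - e ^ 2) * Real.sin E)
    (hr : ∀ E, r E = a * (1 + e * Real.cos E))
    (hφ : ∀ E, φ E = (x E).arg) :
    ∀ E, Real.cos E + e > 0 →
      (1 / 2) * r E ^ 2 * (deriv φ E * (Real.sqrt (2 * h) / r E))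
        = a * Real.sqrt ((h / 2) * (1 - e ^ 2)) := by
  intro E hE
  set q := Real.sqrt (1 - e ^ 2) with hq
  have he2 : (0:ℝ) ≤ 1 - e ^ 2 := by nlinarith
  have hq2 : q ^ 2 = 1 - e ^ 2 := Real.sq_sqrt he2
  have hre : ∀ E', (x E').re = a * (e + Real.cos E') := by
    intro E'; rw [hx]; simp [Complex.cos_ofReal_re]
  have him : ∀ E', (x E').im = a * q * Real.sin E' := by
    intro E'; rw [hx]; simp [Complex.sin_ofReal_re, mul_assoc]
  have hrE : 0 < (x E).re := by rw [hre]; nlinarith [hE]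
  -- φ agrees with the arctan formula near E
  have hc : ContinuousAt (fun E' => (x E').re) E := by
    have : (fun E' => (x E').re) = fun E' => a * (e + Real.cos E') := funext hre
    rw [this]; fun_prop
  have hrepos : ∀ᶠ E' in nhds E, 0 < (x E').re := hc (Ioi_mem_nhds hrE)
  have heq : φ =ᶠ[nhds E] fun E' => Real.arctan ((x E').im / (x E').re) := by
    filter_upwards [hrepos] with E' hp
    rw [hφ, arg_eq_arctan_of_re_pos hp]
  -- derivatives of re and im
  have hdre : HasDerivAt (fun E' => (x E').re) (a * (0 + -Real.sin E)) E := by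
    have : (fun E' => (x E').re) = fun E' => a * (e + Real.cos E') := funext hre
    rw [this]
    exact ((hasDerivAt_const E e).add (Real.hasDerivAt_cos E)).const_mul a
  have hdim : HasDerivAt (fun E' => (x E').im) (a * q * Real.cos E) E := by
    have : (fun E' => (x E').im) = fun E' => a * q * Real.sin E' := funext him
    rw [this]
    exact (Real.hasDerivAt_sin E).const_mul (a * q)
  have hdu : HasDerivAt (fun E' => (x E').im / (x E').re)
      ((a * q * Real.cos E * (x E).re - (x E).im * (a * (0 + -Real.sin E))) / (x E).re ^ 2) E :=
    hdim.div hdre hrE.ne'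
  have hda := hdu.arctan
  have hderiv : deriv φ E = q / (1 + e * Real.cos E) := by
    rw [Filter.EventuallyEq.deriv_eq heq, hda.deriv]
    rw [hre, him]
    have hden : (0:ℝ) < 1 + e * Real.cos E := by nlinarith [hE]
    have h1 : a * (e + Real.cos E) ≠ 0 := ne_of_gt (by nlinarith)
    have h2 : e + Real.cos E ≠ 0 := by linarith
    field_simp
    linear_combination (q*(1+e*Real.cos E) - q*(1-e^2)) * Real.sin_sq_add_cos_sq E
      - (q*Real.sin E^2) * hq2
  -- final computation
  have h4 : Real.sqrt (2 * h) = 2 * Real.sqrt (h / 2) := by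
    rw [show (2*h:ℝ) = (2:ℝ)^2 * (h/2) by ring, Real.sqrt_mul (by positivity),
      Real.sqrt_sq (by norm_num : (0:ℝ) ≤ 2)]
  have hsq : Real.sqrt ((h / 2) * (1 - e ^ 2)) = Real.sqrt (2 * h) * q / 2 := by
    rw [h4, hq, Real.sqrt_mul (by positivity : (0:ℝ) ≤ h/2)]
    ring
  rw [hderiv, hr, hsq]
  have hden : (0:ℝ) < 1 + e * Real.cos E := by nlinarith [hE]
  field_simp
end
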